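/- If a cancellative monoid H is a BF-monoid, then H satisfies the ascending chain condition on principal left ideals Ha and on principal right ideals aH. -/

import Mathlib

open scoped Classical ENNReal

/-- The set of lengths of `a`: all `k` such that `a` is a product of `k` irreducibles,
with the convention `L(a) = {0}` for units. -/
noncomputable def lengths {M : Type*} [Monoid M] (a : M) : Set ℕ :=
  if IsUnit a then {0}
  else {k | ∃ l : List M, l.length = k ∧ (∀ x ∈ l, Irreducible x) ∧ l.prod = a}

/-- A monoid is atomic if every nonunit is a finite product of irreducibles (atoms). -/
def Atomic (M : Type*) [Monoid M] : Prop :=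
  ∀ a : M, ¬IsUnit a → ∃ l : List M, (∀ x ∈ l, Irreducible x) ∧ l.prod = a

/-- The set of distances of a set `L ⊆ ℕ`. -/
def distances (L : Set ℕ) : Set ℕ :=
  {d | 0 < d ∧ ∃ k ∈ L, k + d ∈ L ∧ ∀ m ∈ L, k ≤ m → m ≤ k + d → m = k ∨ m = k + d}

/-- The set of distances `Δ(H)` of a monoid. -/
def DeltaH (M : Type*) [Monoid M] : Set ℕ :=
  ⋃ a : M, distances (lengths a)

/-- The union `U_k(H)` of all sets of lengths containing `k`. -/
def lengthUnion (M : Type*) [Monoid M] (k : ℕ) : Set ℕ :=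
  {ℓ | ∃ l1 l2 : List M, l1.length = k ∧ l2.length = ℓ ∧
      (∀ x ∈ l1, Irreducible x) ∧ (∀ x ∈ l2, Irreducible x) ∧ l1.prod = l2.prod}

/-- The `k`-th elasticity `ρ_k(H) = sup U_k(H)`, valued in `ℝ≥0∞`. -/
noncomputable def rhoK (M : Type*) [Monoid M] (k : ℕ) : ℝ≥0∞ :=
  ⨆ ℓ ∈ lengthUnion M k, (ℓ : ℝ≥0∞)

/-- `λ_k(H) = min U_k(H)`. -/
noncomputable def lamK (M : Type*) [Monoid M] (k : ℕ) : ℕ :=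
  sInf (lengthUnion M k)

/-- The elasticity `ρ(L) = sup L / min L` of a set of lengths, with `ρ({0}) = 1`. -/
noncomputable def setElasticity (L : Set ℕ) : ℝ≥0∞ :=
  if L = {0} then 1 else (⨆ n ∈ L, (n : ℝ≥0∞)) / ((sInf L : ℕ) : ℝ≥0∞)

/-- The elasticity `ρ(H) = sup { ρ(L(a)) : a ∈ H }`. -/
noncomputable def elasticity (M : Type*) [Monoid M] : ℝ≥0∞ :=
  ⨆ a : M, setElasticity (lengths a)

/-- The principal left ideal `Ha`. -/
def leftIdeal {M : Type*} [Monoid M] (a : M) : Set M := Set.range (· * a)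

/-- The principal right ideal `aH`. -/
def rightIdeal {M : Type*} [Monoid M] (a : M) : Set M := Set.range (a * ·)

/-- `A` is a generating set of the monoid `M`. -/
def Generates {M : Type*} [Monoid M] (A : Set M) : Prop :=
  ∀ a : M, ∃ l : List M, (∀ x ∈ l, x ∈ A) ∧ l.prod = a

section Aux
variable {M : Type*}

lemma myIsUnit_of_mul_eq_one [CancelMonoid M] {c x : M} (h : c * x = 1) : IsUnit c := by
  have h2 : x * c = 1 := by
    have : c * (x * c) = c * 1 := by rw [← mul_assoc, h, one_mul, mul_one]
    exact mul_left_cancel this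
  exact ⟨⟨c, x, h, h2⟩, rfl⟩

lemma myNotUnit_mul_left [CancelMonoid M] {c b : M} (hc : ¬IsUnit c) : ¬IsUnit (c * b) := by
  intro h
  obtain ⟨u, hu⟩ := h
  exact hc (myIsUnit_of_mul_eq_one (x := b * ↑u⁻¹)
    (by rw [← mul_assoc, ← hu, Units.mul_inv]))

lemma myNotUnit_mul_right [CancelMonoid M] {c b : M} (hc : ¬IsUnit c) : ¬IsUnit (b * c) := by
  intro h
  obtain ⟨u, hu⟩ := h
  have h1 : (↑u⁻¹ * b) * c = 1 := by rw [mul_assoc, ← hu, Units.inv_mul]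
  have h2 : c * (↑u⁻¹ * b) = 1 := by
    have : (↑u⁻¹ * b) * (c * (↑u⁻¹ * b)) = (↑u⁻¹ * b) * 1 := by
      rw [← mul_assoc, h1, one_mul, mul_one]
    exact mul_left_cancel this
  exact hc (myIsUnit_of_mul_eq_one h2)

lemma myOne_le_of_mem_lengths [Monoid M] {a : M} (ha : ¬IsUnit a) {k : ℕ}
    (hk : k ∈ lengths a) : 1 ≤ k := by
  rw [lengths, if_neg ha] at hk
  obtain ⟨l, hl, _, hp⟩ := hk
  rcases Nat.eq_zero_or_pos k with h0 | h1
  · subst h0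
    rw [List.length_eq_zero_iff] at hl
    subst hl
    simp only [List.prod_nil] at hp
    exact absurd (hp ▸ isUnit_one) ha
  · exact h1

lemma myLengths_unit_mul_subset [Monoid M] (u : Mˣ) (b : M) :
    lengths b ⊆ lengths (↑u * b) := by
  by_cases hb : IsUnit b
  · rw [lengths, if_pos hb, lengths, if_pos (u.isUnit.mul hb)]
  · have hub : ¬IsUnit ((u : M) * b) := by
      intro h
      have hb' : b = ↑u⁻¹ * (↑u * b) := by rw [← mul_assoc, Units.inv_mul, one_mul]
      exact hb (hb' ▸ (u⁻¹.isUnit.mul h))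
    intro k hk
    rw [lengths, if_neg hb] at hk
    rw [lengths, if_neg hub]
    obtain ⟨l, hl, hirr, hp⟩ := hk
    rcases l with _ | ⟨h, t⟩
    · simp only [List.prod_nil] at hp
      exact absurd (hp ▸ isUnit_one) hb
    · refine ⟨(↑u * h) :: t, by simpa using hl, ?_, ?_⟩
      · intro x hx
        rcases List.mem_cons.mp hx with rfl | hx
        · exact (irreducible_units_mul u).mpr (hirr h (List.mem_cons_self))
        · exact hirr x (List.mem_cons_of_mem _ hx)
      · rw [List.prod_cons, mul_assoc, ← List.prod_cons, hp]

lemma myLengths_mul_unit_subset [Monoid M] (u : Mˣ) (b : M) :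
    lengths b ⊆ lengths (b * ↑u) := by
  by_cases hb : IsUnit b
  · rw [lengths, if_pos hb, lengths, if_pos (hb.mul u.isUnit)]
  · have hub : ¬IsUnit (b * (u : M)) := by
      intro h
      have hb' : b = (b * ↑u) * ↑u⁻¹ := by rw [mul_assoc, Units.mul_inv, mul_one]
      exact hb (hb' ▸ (h.mul u⁻¹.isUnit))
    intro k hk
    rw [lengths, if_neg hb] at hk
    rw [lengths, if_neg hub]
    obtain ⟨l, hl, hirr, hp⟩ := hk
    have hne : l ≠ [] := by
      rintro rfl
      simp only [List.prod_nil] at hp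
      exact absurd (hp ▸ isUnit_one) hb
    refine ⟨l.dropLast ++ [l.getLast hne * ↑u], ?_, ?_, ?_⟩
    · have hlp : 0 < l.length := List.length_pos_iff.mpr hne
      rw [List.length_append, List.length_dropLast, List.length_singleton]
      omega
    · intro x hx
      rcases List.mem_append.mp hx with hx | hx
      · exact hirr x ((List.dropLast_sublist l).subset hx)
      · rw [List.mem_singleton] at hx
        subst hx
        exact (irreducible_mul_units u).mpr (hirr _ (List.getLast_mem hne))
    · have hdec : l.dropLast ++ [l.getLast hne] = l := List.dropLast_append_getLast hne
      rw [List.prod_append, List.prod_singleton, ← mul_assoc, ← List.prod_singleton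
        (x := l.getLast hne), ← List.prod_append, hdec, hp]

lemma myLengths_length_pos [Monoid M] {a : M} (ha : ¬IsUnit a) {k : ℕ}
    (hk : k ∈ lengths a) : True := trivial

lemma myLengths_unit_mul [Monoid M] (u : Mˣ) (b : M) :
    lengths ((u : M) * b) = lengths b := by
  refine le_antisymm ?_ (myLengths_unit_mul_subset u b)
  have := myLengths_unit_mul_subset u⁻¹ ((u : M) * b)
  rwa [← mul_assoc, Units.inv_mul, one_mul] at this

lemma myLengths_mul_unit [Monoid M] (u : Mˣ) (b : M) :
    lengths (b * (u : M)) = lengths b := by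
  refine le_antisymm ?_ (myLengths_mul_unit_subset u b)
  have := myLengths_mul_unit_subset u⁻¹ (b * (u : M))
  rwa [mul_assoc, Units.mul_inv, mul_one] at this

lemma myKey_left [CancelMonoid M]
    (hbf : ∀ a : M, (lengths a).Finite ∧ (lengths a).Nonempty)
    {b c : M} (hc : ¬IsUnit c) :
    sSup (lengths b) < sSup (lengths (c * b)) := by
  have hcb : ¬IsUnit (c * b) := myNotUnit_mul_left hc
  obtain ⟨j, hj⟩ := (hbf c).2
  have hj1 : 1 ≤ j := myOne_le_of_mem_lengths hc hj
  by_cases hb : IsUnit b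
  · obtain ⟨u, rfl⟩ := hb
    rw [lengths, if_pos u.isUnit, csSup_singleton]
    have hj' : j ∈ lengths (c * ↑u) := myLengths_mul_unit_subset u c hj
    have := le_csSup (hbf (c * ↑u)).1.bddAbove hj'
    omega
  · set K := sSup (lengths b) with hK
    have hk : K ∈ lengths b := Nat.sSup_mem (hbf b).2 (hbf b).1.bddAbove
    rw [lengths, if_neg hb] at hk
    obtain ⟨lb, hlb, hlbirr, hlbp⟩ := hk
    rw [lengths, if_neg hc] at hj
    obtain ⟨lc, hlc, hlcirr, hlcp⟩ := hj
    have hmem : j + K ∈ lengths (c * b) := by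
      rw [lengths, if_neg hcb]
      refine ⟨lc ++ lb, by rw [List.length_append, hlc, hlb], ?_, ?_⟩
      · intro x hx
        rcases List.mem_append.mp hx with hx | hx
        · exact hlcirr x hx
        · exact hlbirr x hx
      · rw [List.prod_append, hlcp, hlbp]
    have := le_csSup (hbf (c * b)).1.bddAbove hmem
    omega

lemma myKey_right [CancelMonoid M]
    (hbf : ∀ a : M, (lengths a).Finite ∧ (lengths a).Nonempty)
    {b c : M} (hc : ¬IsUnit c) :
    sSup (lengths b) < sSup (lengths (b * c)) := by
  have hcb : ¬IsUnit (b * c) := myNotUnit_mul_right hc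
  obtain ⟨j, hj⟩ := (hbf c).2
  have hj1 : 1 ≤ j := myOne_le_of_mem_lengths hc hj
  by_cases hb : IsUnit b
  · obtain ⟨u, rfl⟩ := hb
    rw [lengths, if_pos u.isUnit, csSup_singleton]
    have hj' : j ∈ lengths ((u : M) * c) := myLengths_unit_mul_subset u c hj
    have := le_csSup (hbf ((u : M) * c)).1.bddAbove hj'
    omega
  · set K := sSup (lengths b) with hK
    have hk : K ∈ lengths b := Nat.sSup_mem (hbf b).2 (hbf b).1.bddAbove
    rw [lengths, if_neg hb] at hk
    obtain ⟨lb, hlb, hlbirr, hlbp⟩ := hk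
    rw [lengths, if_neg hc] at hj
    obtain ⟨lc, hlc, hlcirr, hlcp⟩ := hj
    have hmem : K + j ∈ lengths (b * c) := by
      rw [lengths, if_neg hcb]
      refine ⟨lb ++ lc, by rw [List.length_append, hlc, hlb], ?_, ?_⟩
      · intro x hx
        rcases List.mem_append.mp hx with hx | hx
        · exact hlbirr x hx
        · exact hlcirr x hx
      · rw [List.prod_append, hlcp, hlbp]
    have := le_csSup (hbf (b * c)).1.bddAbove hmem
    omega

end Aux

theorem stmt3 {M : Type*} [CancelMonoid M]
    (hbf : ∀ a : M, (lengths a).Finite ∧ (lengths a).Nonempty) :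
    (∀ f : ℕ → M, (∀ n : ℕ, leftIdeal (f n) ⊆ leftIdeal (f (n + 1))) →
      ∃ N : ℕ, ∀ n : ℕ, N ≤ n → leftIdeal (f n) = leftIdeal (f N)) ∧
    (∀ f : ℕ → M, (∀ n : ℕ, rightIdeal (f n) ⊆ rightIdeal (f (n + 1))) →
      ∃ N : ℕ, ∀ n : ℕ, N ≤ n → rightIdeal (f n) = rightIdeal (f N)) := by
  constructor
  · intro f hchain
    set g : ℕ → ℕ := fun n => sSup (lengths (f n)) with hg
    have hstep : ∀ n, ∃ c : M, c * f (n + 1) = f n := by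
      intro n
      exact hchain n ⟨1, one_mul _⟩
    have hanti : ∀ n, g (n + 1) ≤ g n := by
      intro n
      obtain ⟨c, hc⟩ := hstep n
      by_cases hcu : IsUnit c
      · obtain ⟨u, rfl⟩ := hcu
        have : lengths (f n) = lengths (f (n + 1)) := by
          rw [← hc, myLengths_unit_mul]
        simp only [hg, this, le_refl]
      · have := myKey_left hbf (b := f (n + 1)) hcu
        rw [hc] at this
        exact this.le
    have hmono : ∀ m n, m ≤ n → g n ≤ g m := fun m n h =>
      antitone_nat_of_succ_le hanti h
    have hne : (Set.range g).Nonempty := ⟨g 0, 0, rfl⟩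
    obtain ⟨N, hN⟩ := Nat.sInf_mem hne
    refine ⟨N, ?_⟩
    have hconst : ∀ n, N ≤ n → g n = g N := by
      intro n hn
      exact le_antisymm (hN ▸ hmono N n hn) (hN ▸ Nat.sInf_le ⟨n, rfl⟩)
    intro n hn
    induction n, hn using Nat.le_induction with
    | base => rfl
    | succ n hn ih =>
      obtain ⟨c, hc⟩ := hstep n
      have hcu : IsUnit c := by
        by_contra hcu
        have := myKey_left hbf (b := f (n + 1)) hcu
        rw [hc] at this
        have h1 : g n = g N := hconst n hn
        have h2 : g (n + 1) = g N := hconst (n + 1) (by omega)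
        simp only [hg] at h1 h2
        omega
      obtain ⟨u, rfl⟩ := hcu
      rw [← ih]
      apply le_antisymm
      · rintro x ⟨y, rfl⟩
        exact ⟨y * ↑u⁻¹, by
          show y * ↑u⁻¹ * f n = y * f (n + 1)
          rw [← hc, mul_assoc y, ← mul_assoc (↑u⁻¹ : M), Units.inv_mul, one_mul]⟩
      · exact hchain n
  · intro f hchain
    set g : ℕ → ℕ := fun n => sSup (lengths (f n)) with hg
    have hstep : ∀ n, ∃ c : M, f (n + 1) * c = f n := by
      intro n
      exact hchain n ⟨1, mul_one _⟩
    have hanti : ∀ n, g (n + 1) ≤ g n := by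
      intro n
      obtain ⟨c, hc⟩ := hstep n
      by_cases hcu : IsUnit c
      · obtain ⟨u, rfl⟩ := hcu
        have : lengths (f n) = lengths (f (n + 1)) := by
          rw [← hc, myLengths_mul_unit]
        simp only [hg, this, le_refl]
      · have := myKey_right hbf (b := f (n + 1)) hcu
        rw [hc] at this
        exact this.le
    have hmono : ∀ m n, m ≤ n → g n ≤ g m := fun m n h =>
      antitone_nat_of_succ_le hanti h
    have hne : (Set.range g).Nonempty := ⟨g 0, 0, rfl⟩
    obtain ⟨N, hN⟩ := Nat.sInf_mem hne
    refine ⟨N, ?_⟩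
    have hconst : ∀ n, N ≤ n → g n = g N := by
      intro n hn
      exact le_antisymm (hN ▸ hmono N n hn) (hN ▸ Nat.sInf_le ⟨n, rfl⟩)
    intro n hn
    induction n, hn using Nat.le_induction with
    | base => rfl
    | succ n hn ih =>
      obtain ⟨c, hc⟩ := hstep n
      have hcu : IsUnit c := by
        by_contra hcu
        have := myKey_right hbf (b := f (n + 1)) hcu
        rw [hc] at this
        have h1 : g n = g N := hconst n hn
        have h2 : g (n + 1) = g N := hconst (n + 1) (by omega)
        simp only [hg] at h1 h2
        omega
      obtain ⟨u, rfl⟩ := hcu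
      rw [← ih]
      apply le_antisymm
      · rintro x ⟨y, rfl⟩
        exact ⟨↑u⁻¹ * y, by
          show f n * (↑u⁻¹ * y) = f (n + 1) * y
          rw [← hc, mul_assoc, ← mul_assoc (↑u : M), Units.mul_inv, one_mul]⟩
      · exact hchain n
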